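/- arXiv:0710.0491 — 3 statements merged into one kernel-verified Lean document; each statement's English description precedes it below -/
import Mathlib

section
/- Let d ≥ 1, let p ≥ 1 be an integer, K ≥ 0, u ∈ ℝ and U : ℕ^d → ℝ. Assume there is a family of functions v_J, one for each nonempty subset J ⊆ {1,…,d}, where v_J assigns a real number to each tuple (i_j)_{j∈J} of nonnegative integers and satisfies |v_J| ≤ K everywhere, such that for every i ∈ ℕ^d: u − U(i) = Σ_{∅≠J⊆{1,…,d}} v_J((i_j)_{j∈J}) · Π_{j∈J} 2^{−p i_j}. Define S(n) = Σ_{i∈ℕ^d, i_1+⋯+i_d = n} U(i) and the combination solution u_n = (δ^{d−1} S)(n), where δ is the forward difference operator. Then for every n ∈ ℕ: |u − u_n| ≤ (2K/(d−1)!) · ((2^p+1)/2^{p−1})^{d−1} · (n+2(d−1))^{d−1} · 2^{−pn}. -/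
open Finset Function

/-- Forward difference operator: `(fdiff F) n = F (n+1) - F n`. -/
def fdiff (F : ℕ → ℝ) : ℕ → ℝ := fun n => F (n + 1) - F n

/-- The finite set of multi-indices `i ∈ ℕ^d` with `|i|₁ = l`. -/
def levelFinset (d l : ℕ) : Finset (Fin d → ℕ) :=
  (Fintype.piFinset fun _ : Fin d => Finset.range (l + 1)).filter (fun i => ∑ k, i k = l)

namespace CombTech

lemma fdiff_eq_fwdDiff : fdiff = fwdDiff (1 : ℕ) := rfl

lemma mem_levelFinset {d l : ℕ} {i : Fin d → ℕ} : i ∈ levelFinset d l ↔ ∑ k, i k = l := by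
  simp only [levelFinset, Finset.mem_filter, Fintype.mem_piFinset, Finset.mem_range,
    and_iff_right_iff_imp]
  intro h k
  have : i k ≤ ∑ j, i j := Finset.single_le_sum (fun j _ => Nat.zero_le _) (Finset.mem_univ k)
  omega

lemma levelFinset_eq (d l : ℕ) : levelFinset d l = Finset.piAntidiag Finset.univ l := by
  ext i
  simp [mem_levelFinset, Finset.mem_piAntidiag]

lemma sum_antidiagonal_multichoose (c : ℕ) : ∀ n : ℕ,
    ∑ p ∈ Finset.HasAntidiagonal.antidiagonal n, Nat.multichoose c p.2 = Nat.multichoose (c + 1) n := by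
  intro n
  induction n with
  | zero => simp [Nat.multichoose_zero_right]
  | succ n ih =>
    rw [Finset.Nat.antidiagonal_succ, Finset.sum_cons]
    simp only [Finset.sum_map]
    rw [Nat.multichoose_succ_succ]
    congr 1

lemma card_piAntidiag {ι : Type*} [DecidableEq ι] (s : Finset ι) (n : ℕ) :
    (Finset.piAntidiag s n).card = Nat.multichoose s.card n := by
  induction s using Finset.cons_induction generalizing n with
  | empty =>
    rcases Nat.eq_zero_or_pos n with rfl | hn
    · simp [Nat.multichoose_zero_right]
    · obtain ⟨k, rfl⟩ := Nat.exists_eq_add_of_lt hn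
      simp [Finset.piAntidiag_empty_of_ne_zero, Nat.multichoose_zero_succ]
  | cons i s hi ih =>
    rw [Finset.piAntidiag_cons hi n, Finset.card_disjiUnion]
    simp only [Finset.card_map, ih]
    rw [Finset.card_cons, sum_antidiagonal_multichoose]

lemma factorial_le_mul_pow (a b : ℕ) : (a + b).factorial ≤ a.factorial * (a + b) ^ b := by
  induction b with
  | zero => simp
  | succ b ih =>
    have h1 : (a + (b+1)).factorial = (a + b + 1) * (a + b).factorial := by
      rw [← Nat.factorial_succ]; ring_nf
    rw [h1]
    calc (a + b + 1) * (a + b).factorial ≤ (a + b + 1) * (a.factorial * (a + b) ^ b) :=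
          Nat.mul_le_mul_left _ ih
      _ ≤ a.factorial * (a + (b+1)) ^ (b+1) := by
          rw [pow_succ]
          have h2 : (a + b) ^ b ≤ (a + (b+1)) ^ b := Nat.pow_le_pow_left (by omega) b
          calc (a + b + 1) * (a.factorial * (a + b) ^ b)
              = a.factorial * ((a + b) ^ b * (a + b + 1)) := by ring
            _ ≤ a.factorial * ((a + (b+1)) ^ b * (a + (b+1))) := by
                exact Nat.mul_le_mul_left _ (Nat.mul_le_mul h2 (by omega))

lemma multichoose_mul_factorial_le {m : ℕ} (hm : 1 ≤ m) (s X : ℕ) (hsX : s + m - 1 ≤ X) :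
    (m - 1).factorial * Nat.multichoose m s ≤ X ^ (m - 1) := by
  rw [Nat.multichoose_eq]
  have h1 : m + s - 1 = s + (m - 1) := by omega
  rw [h1]
  have h2 : (s + (m - 1)).choose s = (s + (m - 1)).choose (m - 1) := by
    conv_lhs => rw [← Nat.choose_symm (Nat.le_add_right s (m-1))]
    congr 1
    omega
  rw [h2, ← Nat.descFactorial_eq_factorial_mul_choose]
  calc (s + (m-1)).descFactorial (m-1) ≤ (s + (m-1)) ^ (m-1) := Nat.descFactorial_le_pow _ _
    _ ≤ X ^ (m - 1) := Nat.pow_le_pow_left (by omega) _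

noncomputable def Nc (c t : ℕ) : ℝ := (Nat.multichoose c t : ℝ)

noncomputable def convN (a : ℕ → ℝ) (c : ℕ) : ℕ → ℝ :=
  fun l => ∑ p ∈ Finset.HasAntidiagonal.antidiagonal l, a p.1 * Nc c p.2

lemma convN_eq_range (a : ℕ → ℝ) (c l : ℕ) :
    convN a c l = ∑ k ∈ Finset.range (l + 1), a k * Nc c (l - k) := by
  rw [convN, Finset.Nat.sum_antidiagonal_eq_sum_range_succ_mk]

lemma Nc_zero_right (c : ℕ) : Nc c 0 = 1 := by simp [Nc, Nat.multichoose_zero_right]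

lemma convN_zero (a : ℕ → ℝ) (l : ℕ) : convN a 0 l = a l := by
  rw [convN_eq_range]
  rw [Finset.sum_eq_single l]
  · simp [Nc_zero_right]
  · intro k hk hkl
    have : 0 < l - k := by simp at hk; omega
    obtain ⟨j, hj⟩ := Nat.exists_eq_add_of_lt this
    have : l - k = j + 1 := by omega
    simp [this, Nc, Nat.multichoose_zero_succ]
  · intro h; simp at h

lemma fdiff_convN (a : ℕ → ℝ) (c : ℕ) :
    fdiff (convN a (c + 1)) = fun l => convN a c (l + 1) := by
  funext l
  show convN a (c+1) (l+1) - convN a (c+1) l = convN a c (l+1)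
  rw [convN_eq_range, convN_eq_range, convN_eq_range]
  rw [Finset.sum_range_succ (fun k => a k * Nc (c+1) (l + 1 - k)) (l+1)]
  rw [Finset.sum_range_succ (fun k => a k * Nc c (l + 1 - k)) (l+1)]
  have key : ∀ k ∈ Finset.range (l+1),
      a k * Nc (c+1) (l + 1 - k) = a k * Nc (c+1) (l - k) + a k * Nc c (l + 1 - k) := by
    intro k hk
    simp only [Finset.mem_range] at hk
    have h1 : l + 1 - k = (l - k) + 1 := by omega
    rw [h1, ← mul_add]
    congr 1
    show Nc (c+1) (l - k + 1) = Nc (c+1) (l-k) + Nc c (l - k + 1)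
    simp only [Nc]
    rw [← Nat.cast_add, Nat.multichoose_succ_succ, Nat.add_comm]
  rw [Finset.sum_congr rfl key, Finset.sum_add_distrib]
  simp [Nc_zero_right]
  ring

lemma fdiff_shift (F : ℕ → ℝ) (m : ℕ) :
    fdiff (fun l => F (l + m)) = fun l => fdiff F (l + m) := by
  funext l; simp [fdiff, add_right_comm]

lemma fdiff_iter_shift (F : ℕ → ℝ) (k m : ℕ) :
    fdiff^[k] (fun l => F (l + m)) = fun l => fdiff^[k] F (l + m) := by
  induction k generalizing F with
  | zero => simp
  | succ k ih =>
    rw [Function.iterate_succ_apply, Function.iterate_succ_apply, fdiff_shift, ih]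

lemma fdiff_iter_convN (a : ℕ → ℝ) (c : ℕ) :
    fdiff^[c] (convN a c) = fun l => a (l + c) := by
  induction c with
  | zero => funext l; simp [convN_zero]
  | succ c ih =>
    rw [Function.iterate_succ_apply, fdiff_convN]
    rw [fdiff_iter_shift (convN a c) c 1, ih]
    funext l
    simp [add_assoc, add_comm 1 c]

lemma fdiff_iter_convN_le (a : ℕ → ℝ) (c r n : ℕ) (hcr : c ≤ r) :
    fdiff^[r] (convN a c) n = fdiff^[r - c] a (n + c) := by
  conv_lhs => rw [← Nat.sub_add_cancel hcr]
  rw [Function.iterate_add_apply, fdiff_iter_convN, fdiff_iter_shift]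

lemma abs_fdiff_iter_le (a : ℕ → ℝ) (r n : ℕ) :
    |fdiff^[r] a n| ≤ ∑ q ∈ Finset.range (r + 1), (r.choose q : ℝ) * |a (n + q)| := by
  rw [fdiff_eq_fwdDiff, fwdDiff_iter_eq_sum_shift]
  refine (Finset.abs_sum_le_sum_abs _ _).trans ?_
  apply Finset.sum_le_sum
  intro q _
  rw [zsmul_eq_mul, abs_mul, smul_eq_mul, mul_one]
  apply mul_le_mul_of_nonneg_right _ (abs_nonneg _)
  push_cast
  rw [abs_mul, abs_pow]
  simp

lemma split_sum {d : ℕ} (J : Finset (Fin d)) (l : ℕ) (F : (Fin d → ℕ) → ℝ)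
    (hF : ∀ x y : Fin d → ℕ, (∀ j ∈ J, x j = y j) → F x = F y) :
    ∑ i ∈ Finset.piAntidiag (Finset.univ : Finset (Fin d)) l, F i
      = ∑ p ∈ Finset.HasAntidiagonal.antidiagonal l,
          (∑ x ∈ Finset.piAntidiag J p.1, F x) * ((Finset.piAntidiag Jᶜ p.2).card : ℝ) := by
  classical
  have step1 : ∀ p : ℕ × ℕ,
      (∑ x ∈ Finset.piAntidiag J p.1, F x) * ((Finset.piAntidiag Jᶜ p.2).card : ℝ)
      = ∑ q ∈ (Finset.piAntidiag J p.1) ×ˢ (Finset.piAntidiag Jᶜ p.2), F q.1 := by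
    intro p
    rw [Finset.sum_product, Finset.sum_mul]
    refine Finset.sum_congr rfl fun x _ => ?_
    rw [show (∑ y ∈ Finset.piAntidiag Jᶜ p.2, F (x, y).1)
        = ∑ _y ∈ Finset.piAntidiag Jᶜ p.2, F x from rfl,
      Finset.sum_const, nsmul_eq_mul, mul_comm]
  simp_rw [step1]
  rw [← Finset.sum_sigma (Finset.HasAntidiagonal.antidiagonal l)
    (fun p => (Finset.piAntidiag J p.1) ×ˢ (Finset.piAntidiag Jᶜ p.2)) (fun q => F q.2.1)]
  refine Finset.sum_nbij' (i := fun i => ⟨(∑ j ∈ J, i j, ∑ j ∈ Jᶜ, i j),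
      (fun k => if k ∈ J then i k else 0, fun k => if k ∈ J then 0 else i k)⟩)
    (j := fun q => q.2.1 + q.2.2) ?_ ?_ ?_ ?_ ?_
  · intro i hi
    rw [Finset.mem_piAntidiag] at hi
    simp only [Finset.mem_sigma, Finset.HasAntidiagonal.mem_antidiagonal, Finset.mem_product,
      Finset.mem_piAntidiag]
    refine ⟨?_, ⟨?_, ?_⟩, ?_, ?_⟩
    · rw [Finset.sum_add_sum_compl]; exact hi.1
    · apply Finset.sum_congr rfl; intro j hj; simp [hj]
    · intro k hk
      by_contra hkJ
      simp only [if_neg hkJ, ne_eq, not_true_eq_false] at hk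
    · apply Finset.sum_congr rfl; intro j hj
      simp only [Finset.mem_compl] at hj; simp [hj]
    · intro k hk
      rw [Finset.mem_compl]
      intro hkJ
      simp only [if_pos hkJ, ne_eq, not_true_eq_false] at hk
  · rintro ⟨⟨s, t⟩, x, y⟩ hq
    simp only [Finset.mem_sigma, Finset.HasAntidiagonal.mem_antidiagonal, Finset.mem_product,
      Finset.mem_piAntidiag] at hq
    obtain ⟨hst, ⟨hxs, hxsupp⟩, hyt, hysupp⟩ := hq
    rw [Finset.mem_piAntidiag]
    constructor
    · have hx : ∑ j, x j = s := by
        rw [← hxs]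
        symm
        apply Finset.sum_subset (Finset.subset_univ J)
        intro k _ hk
        by_contra h
        exact hk (hxsupp k h)
      have hy : ∑ j, y j = t := by
        rw [← hyt]
        symm
        apply Finset.sum_subset (Finset.subset_univ Jᶜ)
        intro k _ hk
        by_contra h
        exact hk (hysupp k h)
      simp only [Pi.add_apply, Finset.sum_add_distrib, hx, hy, hst]
    · intro k _; exact Finset.mem_univ k
  · intro i hi
    funext k
    simp only [Pi.add_apply]
    by_cases hk : k ∈ J <;> simp [hk]
  · rintro ⟨⟨s, t⟩, x, y⟩ hq
    simp only [Finset.mem_sigma, Finset.HasAntidiagonal.mem_antidiagonal, Finset.mem_product,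
      Finset.mem_piAntidiag] at hq
    obtain ⟨hst, ⟨hxs, hxsupp⟩, hyt, hysupp⟩ := hq
    simp only
    have hxz : ∀ k, k ∉ J → x k = 0 := by
      intro k hk; by_contra h; exact hk (hxsupp k h)
    have hyz : ∀ k, k ∈ J → y k = 0 := by
      intro k hk; by_contra h
      have := hysupp k h
      rw [Finset.mem_compl] at this
      exact this hk
    have h1 : ∀ p : ℕ × ℕ, ∀ a b : Fin d → ℕ,
        (Sigma.mk p (a, b) : (_ : ℕ × ℕ) × ((Fin d → ℕ) × (Fin d → ℕ)))
          = ⟨(s, t), (x, y)⟩ ↔ p = (s, t) ∧ a = x ∧ b = y := by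
      intro p a b
      constructor
      · intro h
        injection h with h1 h2
        refine ⟨h1, ?_, ?_⟩
        · exact congrArg Prod.fst h2
        · exact congrArg Prod.snd h2
      · rintro ⟨rfl, rfl, rfl⟩; rfl
    rw [h1]
    refine ⟨?_, ?_, ?_⟩
    · have e1 : ∑ j ∈ J, (x + y) j = s := by
        rw [← hxs]
        apply Finset.sum_congr rfl
        intro j hj
        simp [Pi.add_apply, hyz j hj]
      have e2 : ∑ j ∈ Jᶜ, (x + y) j = t := by
        rw [← hyt]
        apply Finset.sum_congr rfl
        intro j hj
        rw [Finset.mem_compl] at hj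
        simp [Pi.add_apply, hxz j hj]
      rw [e1, e2]
    · funext k
      by_cases hk : k ∈ J <;> simp [hk, hyz, hxz]
    · funext k
      by_cases hk : k ∈ J <;> simp [hk, hyz, hxz]
  · intro i hi
    simp only
    apply hF
    intro j hj
    simp [hj]

lemma fdiff_iter_sub (F G : ℕ → ℝ) (k n : ℕ) :
    fdiff^[k] (fun l => F l - G l) n = fdiff^[k] F n - fdiff^[k] G n := by
  have h : (fun l => F l - G l) = F + (-1 : ℝ) • G := by
    funext l; simp [sub_eq_add_neg]
  rw [h, fdiff_eq_fwdDiff, fwdDiff_iter_add, fwdDiff_iter_const_smul]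
  simp [sub_eq_add_neg]

lemma fdiff_iter_const_mul (c : ℝ) (F : ℕ → ℝ) (k n : ℕ) :
    fdiff^[k] (fun l => c * F l) n = c * fdiff^[k] F n := by
  have h : (fun l => c * F l) = c • F := by funext l; simp
  rw [h, fdiff_eq_fwdDiff, fwdDiff_iter_const_smul]
  simp

lemma fdiff_iter_sum {β : Type*} (T : Finset β) (F : β → ℕ → ℝ) (k n : ℕ) :
    fdiff^[k] (fun l => ∑ J ∈ T, F J l) n = ∑ J ∈ T, fdiff^[k] (F J) n := by
  have h : (fun l => ∑ J ∈ T, F J l) = ∑ J ∈ T, F J := by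
    funext l; rw [Finset.sum_apply]
  rw [h, fdiff_eq_fwdDiff, fwdDiff_iter_finset_sum]
  simp

end CombTech

open CombTech in
/-- Error bound for the combination technique (Theorem `zweiteOrdnung`). -/
theorem combination_error_bound (d p : ℕ) (hd : 1 ≤ d) (hp : 1 ≤ p)
    (K : ℝ) (hK : 0 ≤ K) (u : ℝ) (U : (Fin d → ℕ) → ℝ)
    (v : Finset (Fin d) → (Fin d → ℕ) → ℝ)
    (hdep : ∀ (J : Finset (Fin d)) (i i' : Fin d → ℕ),
      (∀ j ∈ J, i j = i' j) → v J i = v J i')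
    (hbound : ∀ (J : Finset (Fin d)) (i : Fin d → ℕ), |v J i| ≤ K)
    (hexp : ∀ i : Fin d → ℕ,
      u - U i = ∑ J ∈ Finset.univ.filter (fun J : Finset (Fin d) => J.Nonempty),
        v J i * ∏ j ∈ J, ((1 : ℝ) / 2) ^ (p * i j)) :
    ∀ n : ℕ,
      |u - fdiff^[d - 1] (fun l => ∑ i ∈ levelFinset d l, U i) n|
        ≤ (2 * K / (Nat.factorial (d - 1) : ℝ)) *
            (((2 : ℝ) ^ p + 1) / (2 : ℝ) ^ (p - 1)) ^ (d - 1) *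
            ((n : ℝ) + 2 * ((d : ℝ) - 1)) ^ (d - 1) * ((1 : ℝ) / 2) ^ (p * n) := by
  classical
  intro n
  set T : Finset (Finset (Fin d)) :=
    Finset.univ.filter (fun J : Finset (Fin d) => J.Nonempty) with hT
  set S : ℕ → ℝ := fun l => ∑ i ∈ levelFinset d l, U i with hSdef
  set aJ : Finset (Fin d) → ℕ → ℝ :=
    fun J s => (∑ x ∈ Finset.piAntidiag J s, v J x) * ((1:ℝ)/2)^(p*s) with haJ
  set Xn : ℕ := n + 2 * (d - 1) with hXn
  -- Step A1 : per-J splitting into a convolution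
  have hA1 : ∀ J ∈ T, ∀ l : ℕ,
      (∑ i ∈ levelFinset d l, v J i * ∏ j ∈ J, ((1:ℝ)/2)^(p * i j))
        = convN (aJ J) (d - J.card) l := by
    intro J _ l
    rw [levelFinset_eq]
    have hbody : ∀ i : Fin d → ℕ,
        v J i * ∏ j ∈ J, ((1:ℝ)/2)^(p * i j)
          = v J i * ((1:ℝ)/2)^(p * ∑ j ∈ J, i j) := by
      intro i
      congr 1
      rw [Finset.prod_pow_eq_pow_sum]
      congr 1
      rw [Finset.mul_sum]
    rw [Finset.sum_congr rfl (fun i _ => hbody i)]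
    rw [split_sum J l _ (fun x y hxy => by
      rw [hdep J x y hxy, Finset.sum_congr rfl hxy])]
    rw [convN]
    apply Finset.sum_congr rfl
    intro q _
    congr 1
    · rw [haJ]
      simp only
      rw [Finset.sum_mul]
      apply Finset.sum_congr rfl
      intro x hx
      rw [Finset.mem_piAntidiag] at hx
      rw [hx.1]
    · rw [card_piAntidiag, Finset.card_compl]
      simp [Nc, Fintype.card_fin]
  -- Step A2 : full error as sum of convolutions
  have hcard : ∀ l : ℕ, ((levelFinset d l).card : ℝ) = Nc d l := by
    intro l
    rw [levelFinset_eq, card_piAntidiag, Finset.card_univ, Fintype.card_fin]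
    rfl
  have hA2 : ∀ l : ℕ, u * Nc d l - S l = ∑ J ∈ T, convN (aJ J) (d - J.card) l := by
    intro l
    have h1 : ∑ i ∈ levelFinset d l, (u - U i) = u * Nc d l - S l := by
      rw [Finset.sum_sub_distrib, Finset.sum_const, nsmul_eq_mul, hcard l, mul_comm]
    rw [← h1]
    calc ∑ i ∈ levelFinset d l, (u - U i)
        = ∑ i ∈ levelFinset d l, ∑ J ∈ T,
            v J i * ∏ j ∈ J, ((1:ℝ)/2)^(p * i j) :=
          Finset.sum_congr rfl (fun i _ => hexp i)
      _ = ∑ J ∈ T, ∑ i ∈ levelFinset d l,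
            v J i * ∏ j ∈ J, ((1:ℝ)/2)^(p * i j) := Finset.sum_comm
      _ = ∑ J ∈ T, convN (aJ J) (d - J.card) l :=
          Finset.sum_congr rfl (fun J hJ => hA1 J hJ l)
  -- fdiff^[d-1] of the counting function is 1
  have hNcd : fdiff^[d-1] (Nc d) n = 1 := by
    have h1 : Nc d = convN (fun _ => (1:ℝ)) (d-1) := by
      funext l
      rw [convN]
      simp only [one_mul]
      rw [show (∑ p ∈ Finset.HasAntidiagonal.antidiagonal l, Nc (d-1) p.2)
          = ((∑ p ∈ Finset.HasAntidiagonal.antidiagonal l, Nat.multichoose (d-1) p.2 : ℕ) : ℝ) by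
        push_cast [Nc]; rfl]
      rw [sum_antidiagonal_multichoose]
      rw [show d - 1 + 1 = d from by omega]
      rfl
    rw [h1, fdiff_iter_convN_le _ _ _ _ (le_refl _)]
    simp
  -- main identity
  have hmain : u - fdiff^[d-1] S n
      = ∑ J ∈ T, fdiff^[J.card - 1] (aJ J) (n + (d - J.card)) := by
    have h2 : u - fdiff^[d-1] S n = fdiff^[d-1] (fun l => u * Nc d l - S l) n := by
      rw [fdiff_iter_sub (fun l => u * Nc d l) S, fdiff_iter_const_mul, hNcd, mul_one]
    rw [h2]
    rw [show (fun l => u * Nc d l - S l)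
        = (fun l => ∑ J ∈ T, convN (aJ J) (d - J.card) l) from funext hA2]
    rw [fdiff_iter_sum]
    apply Finset.sum_congr rfl
    intro J hJ
    have hJne : J.Nonempty := by
      rw [hT] at hJ
      simpa using hJ
    have hm1 : 1 ≤ J.card := hJne.card_pos
    have hmd : J.card ≤ d := le_trans (Finset.card_le_univ J) (by simp)
    rw [fdiff_iter_convN_le _ _ _ _ (by omega : d - J.card ≤ d - 1),
      show d - 1 - (d - J.card) = J.card - 1 from by omega]
  -- Step B : per-J bound
  have hB : ∀ J ∈ T, |fdiff^[J.card - 1] (aJ J) (n + (d - J.card))|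
      ≤ (K * ((1:ℝ)/2)^(p*n) * (1 + ((1:ℝ)/2)^p)^(d-1)
          * ((Xn:ℝ)^(d-1) / ((d-1).factorial : ℝ))) * ((1:ℝ)/4)^(d - J.card) := by
    intro J hJ
    have hJne : J.Nonempty := by rw [hT] at hJ; simpa using hJ
    set m : ℕ := J.card with hm
    have hm1 : 1 ≤ m := hJne.card_pos
    have hmd : m ≤ d := le_trans (Finset.card_le_univ J) (by simp)
    -- bound on |aJ J s|
    have ha : ∀ s : ℕ, |aJ J s| ≤ K * (Nat.multichoose m s : ℝ) * ((1:ℝ)/2)^(p*s) := by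
      intro s
      rw [haJ]
      simp only
      rw [abs_mul, abs_of_nonneg (by positivity : (0:ℝ) ≤ ((1:ℝ)/2)^(p*s))]
      apply mul_le_mul_of_nonneg_right _ (by positivity)
      calc |∑ x ∈ Finset.piAntidiag J s, v J x|
          ≤ ∑ x ∈ Finset.piAntidiag J s, |v J x| := Finset.abs_sum_le_sum_abs _ _
        _ ≤ ∑ _x ∈ Finset.piAntidiag J s, K := Finset.sum_le_sum (fun x _ => hbound J x)
        _ = ((Finset.piAntidiag J s).card : ℝ) * K := by
            rw [Finset.sum_const, nsmul_eq_mul]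
        _ = K * (Nat.multichoose m s : ℝ) := by
            rw [card_piAntidiag, mul_comm, hm]
    -- key factorial inequality (natural numbers)
    have keyNat : (d-1).factorial * 2^(d-m) * Xn^(m-1)
        ≤ (m-1).factorial * Xn^(d-1) := by
      have hf : (d-1).factorial ≤ (m-1).factorial * (d-1)^(d-m) := by
        have h := factorial_le_mul_pow (m-1) (d-m)
        rwa [show (m-1)+(d-m) = d-1 from by omega] at h
      calc (d-1).factorial * 2^(d-m) * Xn^(m-1)
          ≤ ((m-1).factorial * (d-1)^(d-m)) * 2^(d-m) * Xn^(m-1) :=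
            Nat.mul_le_mul_right _ (Nat.mul_le_mul_right _ hf)
        _ = (m-1).factorial * ((2*(d-1))^(d-m) * Xn^(m-1)) := by rw [mul_pow]; ring
        _ ≤ (m-1).factorial * (Xn^(d-m) * Xn^(m-1)) :=
            Nat.mul_le_mul_left _
              (Nat.mul_le_mul_right _ (Nat.pow_le_pow_left (by omega) _))
        _ = (m-1).factorial * Xn^(d-1) := by
            rw [← pow_add]
            congr 2
            omega
    have hkey : (Xn:ℝ)^(m-1) / ((m-1).factorial : ℝ)
        ≤ ((1:ℝ)/2)^(d-m) * ((Xn:ℝ)^(d-1) / ((d-1).factorial : ℝ)) := by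
      have hc : (((d-1).factorial : ℝ)) * 2^(d-m) * (Xn:ℝ)^(m-1)
          ≤ ((m-1).factorial : ℝ) * (Xn:ℝ)^(d-1) := by
        exact_mod_cast keyNat
      have e : ((1:ℝ)/2)^(d-m) * ((Xn:ℝ)^(d-1) / ((d-1).factorial : ℝ))
          = (((m-1).factorial : ℝ) * (Xn:ℝ)^(d-1))
            / (((m-1).factorial : ℝ) * 2^(d-m) * ((d-1).factorial : ℝ)) := by
        have f1 : ((m-1).factorial : ℝ) ≠ 0 := by positivity
        have f2 : ((d-1).factorial : ℝ) ≠ 0 := by positivity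
        rw [div_pow]
        field_simp
        ring
      rw [e, div_le_div_iff₀ (by positivity) (by positivity)]
      calc (Xn:ℝ)^(m-1) * (((m-1).factorial : ℝ) * 2^(d-m) * ((d-1).factorial : ℝ))
          = (((d-1).factorial : ℝ) * 2^(d-m) * (Xn:ℝ)^(m-1)) * ((m-1).factorial : ℝ) := by
            ring
        _ ≤ (((m-1).factorial : ℝ) * (Xn:ℝ)^(d-1)) * ((m-1).factorial : ℝ) :=
            mul_le_mul_of_nonneg_right hc (by positivity)
        _ = ((m-1).factorial : ℝ) * (Xn:ℝ)^(d-1) * ((m-1).factorial : ℝ) := by ring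
    -- triangle inequality for iterated differences
    have h5 := abs_fdiff_iter_le (aJ J) (m-1) (n + (d-m))
    rw [show m - 1 + 1 = m from by omega] at h5
    -- per-q estimate
    have h6 : ∀ q ∈ Finset.range m,
        ((m-1).choose q : ℝ) * |aJ J (n + (d-m) + q)|
          ≤ (((m-1).choose q : ℝ) * (((1:ℝ)/2)^p)^q)
            * (K * ((Xn:ℝ)^(m-1) / ((m-1).factorial : ℝ))
                * (((1:ℝ)/2)^p)^(d-m) * ((1:ℝ)/2)^(p*n)) := by
      intro q hq
      rw [Finset.mem_range] at hq
      have hq' : q ≤ m - 1 := by omega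
      have hmc : (Nat.multichoose m (n + (d-m) + q) : ℝ)
          ≤ (Xn:ℝ)^(m-1) / ((m-1).factorial : ℝ) := by
        rw [le_div_iff₀ (by positivity)]
        have h := multichoose_mul_factorial_le hm1 (n + (d-m) + q) Xn (by omega)
        calc (Nat.multichoose m (n + (d-m) + q) : ℝ) * ((m-1).factorial : ℝ)
            = (((m-1).factorial * Nat.multichoose m (n + (d-m) + q) : ℕ) : ℝ) := by
              push_cast; ring
          _ ≤ ((Xn ^ (m-1) : ℕ) : ℝ) := Nat.cast_le.mpr h
          _ = (Xn:ℝ)^(m-1) := by push_cast; rfl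
      have hpow : ((1:ℝ)/2)^(p*(n + (d-m) + q))
          = ((1:ℝ)/2)^(p*n) * (((1:ℝ)/2)^p)^(d-m) * (((1:ℝ)/2)^p)^q := by
        rw [← pow_mul, ← pow_mul, ← pow_add, ← pow_add]
        congr 1
        ring
      calc ((m-1).choose q : ℝ) * |aJ J (n + (d-m) + q)|
          ≤ ((m-1).choose q : ℝ)
              * (K * (Nat.multichoose m (n + (d-m) + q) : ℝ)
                  * ((1:ℝ)/2)^(p*(n + (d-m) + q))) :=
            mul_le_mul_of_nonneg_left (ha _) (by positivity)
        _ = (K * (Nat.multichoose m (n + (d-m) + q) : ℝ))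
              * (((m-1).choose q : ℝ) * (((1:ℝ)/2)^p)^q
                  * (((1:ℝ)/2)^p)^(d-m) * ((1:ℝ)/2)^(p*n)) := by
            rw [hpow]; ring
        _ ≤ (K * ((Xn:ℝ)^(m-1) / ((m-1).factorial : ℝ)))
              * (((m-1).choose q : ℝ) * (((1:ℝ)/2)^p)^q
                  * (((1:ℝ)/2)^p)^(d-m) * ((1:ℝ)/2)^(p*n)) := by
            apply mul_le_mul_of_nonneg_right (mul_le_mul_of_nonneg_left hmc hK)
            positivity
        _ = (((m-1).choose q : ℝ) * (((1:ℝ)/2)^p)^q)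
            * (K * ((Xn:ℝ)^(m-1) / ((m-1).factorial : ℝ))
                * (((1:ℝ)/2)^p)^(d-m) * ((1:ℝ)/2)^(p*n)) := by ring
    -- binomial sum
    have h7 : (∑ q ∈ Finset.range m, ((m-1).choose q : ℝ) * (((1:ℝ)/2)^p)^q)
        = (1 + ((1:ℝ)/2)^p)^(m-1) := by
      rw [show (1 + ((1:ℝ)/2)^p) = (((1:ℝ)/2)^p + 1) from by ring]
      rw [add_pow]
      rw [show m - 1 + 1 = m from by omega]
      apply Finset.sum_congr rfl
      intro q _
      rw [one_pow]
      ring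
    -- monotonicity bounds
    have t1 : (1 + ((1:ℝ)/2)^p)^(m-1) ≤ (1 + ((1:ℝ)/2)^p)^(d-1) := by
      apply pow_le_pow_right₀ (le_add_of_nonneg_right (by positivity))
      omega
    have t3 : (((1:ℝ)/2)^p)^(d-m) ≤ ((1:ℝ)/2)^(d-m) := by
      apply pow_le_pow_left₀ (by positivity)
      calc ((1:ℝ)/2)^p ≤ ((1:ℝ)/2)^1 := by
            apply pow_le_pow_of_le_one (by norm_num) (by norm_num) hp
        _ = (1:ℝ)/2 := pow_one _
    calc |fdiff^[m - 1] (aJ J) (n + (d - m))|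
        ≤ ∑ q ∈ Finset.range m, ((m-1).choose q : ℝ) * |aJ J (n + (d-m) + q)| := h5
      _ ≤ ∑ q ∈ Finset.range m, (((m-1).choose q : ℝ) * (((1:ℝ)/2)^p)^q)
            * (K * ((Xn:ℝ)^(m-1) / ((m-1).factorial : ℝ))
                * (((1:ℝ)/2)^p)^(d-m) * ((1:ℝ)/2)^(p*n)) := Finset.sum_le_sum h6
      _ = (1 + ((1:ℝ)/2)^p)^(m-1)
            * (K * ((Xn:ℝ)^(m-1) / ((m-1).factorial : ℝ))
                * (((1:ℝ)/2)^p)^(d-m) * ((1:ℝ)/2)^(p*n)) := by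
          rw [← Finset.sum_mul, h7]
      _ = (K * ((1:ℝ)/2)^(p*n))
            * ((1 + ((1:ℝ)/2)^p)^(m-1) * ((Xn:ℝ)^(m-1) / ((m-1).factorial : ℝ))
                * (((1:ℝ)/2)^p)^(d-m)) := by ring
      _ ≤ (K * ((1:ℝ)/2)^(p*n))
            * ((1 + ((1:ℝ)/2)^p)^(d-1)
                * (((1:ℝ)/2)^(d-m) * ((Xn:ℝ)^(d-1) / ((d-1).factorial : ℝ)))
                * ((1:ℝ)/2)^(d-m)) := by
          apply mul_le_mul_of_nonneg_left _ (mul_nonneg hK (by positivity))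
          apply mul_le_mul _ t3 (by positivity) (by positivity)
          apply mul_le_mul t1 hkey (by positivity) (by positivity)
      _ = (K * ((1:ℝ)/2)^(p*n) * (1 + ((1:ℝ)/2)^p)^(d-1)
            * ((Xn:ℝ)^(d-1) / ((d-1).factorial : ℝ)))
          * (((1:ℝ)/2)^(d-m) * ((1:ℝ)/2)^(d-m)) := by ring
      _ = (K * ((1:ℝ)/2)^(p*n) * (1 + ((1:ℝ)/2)^p)^(d-1)
            * ((Xn:ℝ)^(d-1) / ((d-1).factorial : ℝ))) * ((1:ℝ)/4)^(d-m) := by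
          rw [← mul_pow]
          norm_num
  -- sum the per-J bounds
  set C0 : ℝ := K * ((1:ℝ)/2)^(p*n) * (1 + ((1:ℝ)/2)^p)^(d-1)
      * ((Xn:ℝ)^(d-1) / ((d-1).factorial : ℝ)) with hC0def
  have hC0 : 0 ≤ C0 := by
    rw [hC0def]
    apply mul_nonneg
    apply mul_nonneg
    apply mul_nonneg hK
    all_goals positivity
  have hsum : (∑ J : Finset (Fin d), ((1:ℝ)/4)^(d - J.card)) ≤ 2^d := by
    have h8 : ∀ J : Finset (Fin d), ((1:ℝ)/4)^(d - J.card) = (1/4:ℝ)^d * 4^(J.card) := by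
      intro J
      have hc : J.card ≤ d := le_trans (Finset.card_le_univ J) (by simp)
      calc ((1:ℝ)/4)^(d-J.card)
          = ((1:ℝ)/4)^(d-J.card) * (((1:ℝ)/4)^J.card * 4^J.card) := by
            rw [← mul_pow]
            norm_num
        _ = (1/4:ℝ)^d * 4^(J.card) := by
            rw [← mul_assoc, ← pow_add, show d - J.card + J.card = d from by omega]
    rw [Finset.sum_congr rfl (fun J _ => h8 J), ← Finset.mul_sum]
    have h9 : (∑ J : Finset (Fin d), (4:ℝ)^(J.card)) = 5^d := by
      have h := Finset.prod_add (fun _ : Fin d => (4:ℝ)) (fun _ => (1:ℝ)) Finset.univ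
      calc (∑ J : Finset (Fin d), (4:ℝ)^(J.card))
          = ∑ J ∈ (Finset.univ : Finset (Fin d)).powerset,
              (∏ _i ∈ J, (4:ℝ)) * ∏ _i ∈ Finset.univ \ J, (1:ℝ) := by
            rw [Finset.powerset_univ]
            apply Finset.sum_congr rfl
            intro J _
            simp [Finset.prod_const]
        _ = ∏ _i : Fin d, ((4:ℝ) + 1) := h.symm
        _ = 5^d := by
            rw [Finset.prod_const]
            norm_num
    rw [h9, ← mul_pow]
    apply pow_le_pow_left₀ (by norm_num)
    norm_num
  -- cast identities for the final form
  have hXr : ((n : ℝ) + 2 * ((d : ℝ) - 1)) = (Xn : ℝ) := by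
    rw [hXn]
    push_cast [Nat.cast_sub hd]
    ring
  have hfrac : ((2:ℝ)^p + 1) / (2:ℝ)^(p-1) = 2 * (1 + ((1:ℝ)/2)^p) := by
    have h2p : (2:ℝ)^p = 2^(p-1) * 2 := by
      rw [← pow_succ]
      congr 1
      omega
    have hne : (2:ℝ)^(p-1) ≠ 0 := by positivity
    rw [div_eq_iff hne, div_pow]
    field_simp
    rw [h2p]
    ring
  calc |u - fdiff^[d-1] S n|
      = |∑ J ∈ T, fdiff^[J.card - 1] (aJ J) (n + (d - J.card))| := by rw [hmain]
    _ ≤ ∑ J ∈ T, |fdiff^[J.card - 1] (aJ J) (n + (d - J.card))| :=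
        Finset.abs_sum_le_sum_abs _ _
    _ ≤ ∑ J ∈ T, C0 * ((1:ℝ)/4)^(d - J.card) := Finset.sum_le_sum hB
    _ ≤ ∑ J : Finset (Fin d), C0 * ((1:ℝ)/4)^(d - J.card) := by
        apply Finset.sum_le_sum_of_subset_of_nonneg (Finset.filter_subset _ _)
        intro J _ _
        exact mul_nonneg hC0 (by positivity)
    _ = C0 * ∑ J : Finset (Fin d), ((1:ℝ)/4)^(d - J.card) := by rw [Finset.mul_sum]
    _ ≤ C0 * 2^d := mul_le_mul_of_nonneg_left hsum hC0
    _ = (2 * K / ((d-1).factorial : ℝ))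
          * (((2:ℝ)^p + 1) / (2:ℝ)^(p-1))^(d-1)
          * ((n : ℝ) + 2 * ((d : ℝ) - 1))^(d-1) * ((1:ℝ)/2)^(p*n) := by
        rw [hfrac, hXr, hC0def]
        rw [mul_pow]
        rw [show (2:ℝ)^d = 2 * 2^(d-1) from by
          rw [← pow_succ']
          congr 1
          omega]
        ring
end

section
/- Let d ≥ 2, let p ≥ 1 be an integer, K ≥ 0, u ∈ ℝ and U : ℕ^d → ℝ, and assume the error expansion hypothesis: there are functions v_J, one for each nonempty J ⊆ {1,…,d}, assigning a real number to each tuple (i_j)_{j∈J} of nonnegative integers, with |v_J| ≤ K, such that u − U(i) = Σ_{∅≠J} v_J((i_j)_{j∈J}) · Π_{j∈J} 2^{−p i_j} for all i ∈ ℕ^d. With S(n) = Σ_{|i|_1 = n} U(i) and u_n = (δ^{d−1} S)(n) (δ the forward difference operator), for every n ∈ ℕ: |u − u_n| ≤ 2K · ((2^p+1)/2^{p−1})^{d−1} · (1 + (n+d−1)·(1+ln(d−1))/(d−1))^{d−1} · 2^{−pn}. -/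
lemma fdiff_iterate_congr :
    ∀ k (F G : ℕ → ℝ) n, (∀ l, n ≤ l → l ≤ n + k → F l = G l) →
      fdiff^[k] F n = fdiff^[k] G n := by
  intro k
  induction k with
  | zero => intro F G n h; simpa using h n le_rfl (by omega)
  | succ k ih =>
    intro F G n h
    rw [Function.iterate_succ_apply, Function.iterate_succ_apply]
    apply ih
    intro l hl hl'
    simp only [fdiff]
    rw [h l (by omega) (by omega), h (l+1) (by omega) (by omega)]

lemma fdiff_sum {α : Type*} (M : Finset α) (f : α → ℕ → ℝ) :
    fdiff (fun l => ∑ m ∈ M, f m l) = fun l => ∑ m ∈ M, fdiff (f m) l := by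
  funext l
  simp [fdiff, Finset.sum_sub_distrib]

lemma fdiff_iterate_sum {α : Type*} (k : ℕ) (M : Finset α) (f : α → ℕ → ℝ) (n : ℕ) :
    fdiff^[k] (fun l => ∑ m ∈ M, f m l) n = ∑ m ∈ M, fdiff^[k] (f m) n := by
  induction k generalizing f with
  | zero => simp
  | succ k ih =>
    rw [Function.iterate_succ_apply, fdiff_sum, ih]
    simp [Function.iterate_succ_apply]

lemma fdiff_iterate_sub (k : ℕ) (F G : ℕ → ℝ) (n : ℕ) :
    fdiff^[k] (fun l => F l - G l) n = fdiff^[k] F n - fdiff^[k] G n := by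
  induction k generalizing F G with
  | zero => simp
  | succ k ih =>
    rw [Function.iterate_succ_apply, Function.iterate_succ_apply,
      Function.iterate_succ_apply]
    rw [show fdiff (fun l => F l - G l) = fun l => fdiff F l - fdiff G l by
      funext l; simp [fdiff]; ring]
    exact ih _ _

lemma fdiff_iterate_const_mul (k : ℕ) (c : ℝ) (F : ℕ → ℝ) (n : ℕ) :
    fdiff^[k] (fun l => c * F l) n = c * fdiff^[k] F n := by
  induction k generalizing F with
  | zero => simp
  | succ k ih =>
    rw [Function.iterate_succ_apply, Function.iterate_succ_apply]
    rw [show fdiff (fun l => c * F l) = fun l => c * fdiff F l by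
      funext l; simp [fdiff]; ring]
    exact ih _

/-- indicator of `a` -/
def chi (a : ℤ) : ℕ → ℝ := fun l => if (l : ℤ) = a then 1 else 0

lemma fdiff_iter_chi_zero : ∀ (k n : ℕ) (a : ℤ), (a < n ∨ (n : ℤ) + k < a) → fdiff^[k] (chi a) n = 0 := by
  intro k
  induction k with
  | zero =>
    intro n a h
    simp only [Function.iterate_zero, id_eq, chi]
    rw [if_neg]; omega
  | succ k ih =>
    intro n a h
    rw [Function.iterate_succ_apply', fdiff]
    rw [ih n a (by omega), ih (n+1) a (by push_cast; omega)]
    ring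

lemma fdiff_iter_chi_bound : ∀ (k n : ℕ) (a : ℤ),
    |fdiff^[k] (chi a) n| ≤ (k.choose (a - n).toNat : ℝ) := by
  intro k
  induction k with
  | zero =>
    intro n a
    simp only [Function.iterate_zero, id_eq, chi]
    by_cases h : (n : ℤ) = a
    · rw [if_pos h, show (a - n).toNat = 0 by omega]
      simp
    · rw [if_neg h]
      simpa using Nat.cast_nonneg _
  | succ k ih =>
    intro n a
    rw [Function.iterate_succ_apply', fdiff]
    by_cases h : a ≤ (n : ℤ)
    · rcases lt_or_eq_of_le h with h' | h'
      · rw [fdiff_iter_chi_zero k n a (Or.inl h'),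
          fdiff_iter_chi_zero k (n+1) a (by push_cast; omega)]
        simpa using Nat.cast_nonneg _
      · rw [fdiff_iter_chi_zero k (n+1) a (by omega)]
        rw [show (a - n).toNat = 0 by omega]
        calc |0 - fdiff^[k] (chi a) n| = |fdiff^[k] (chi a) n| := by rw [zero_sub, abs_neg]
        _ ≤ (k.choose (a - n).toNat : ℝ) := ih n a
        _ = 1 := by rw [show (a - n).toNat = 0 by omega]; simp
        _ ≤ _ := by simp
    · push_neg at h
      calc |fdiff^[k] (chi a) (n+1) - fdiff^[k] (chi a) n|
          ≤ |fdiff^[k] (chi a) (n+1)| + |fdiff^[k] (chi a) n| := abs_sub _ _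
        _ ≤ (k.choose (a - (n+1:ℕ)).toNat : ℝ) + (k.choose (a - n).toNat : ℝ) :=
            add_le_add (ih (n+1) a) (ih n a)
        _ = ((k.choose (a - n - 1).toNat + k.choose ((a - n - 1).toNat + 1) : ℕ) : ℝ) := by
            push_cast
            rw [show ((a : ℤ) - ((n:ℤ)+1)).toNat = (a - n - 1).toNat by omega,
              show (a - (n:ℤ)).toNat = (a - n - 1).toNat + 1 by omega]
        _ = ((k+1).choose (a - n).toNat : ℝ) := by
            rw [show (a - (n:ℤ)).toNat = (a - n - 1).toNat + 1 by omega,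
              Nat.choose_succ_succ]

/-- compositions of `t` supported on `T` -/
def compFinset {d : ℕ} (T : Finset (Fin d)) (t : ℕ) : Finset (Fin d → ℕ) :=
  (Fintype.piFinset fun _ : Fin d => Finset.range (t + 1)).filter
    (fun w => (∀ j ∉ T, w j = 0) ∧ ∑ j, w j = t)

lemma mem_compFinset {d : ℕ} {T : Finset (Fin d)} {t : ℕ} {w : Fin d → ℕ} :
    w ∈ compFinset T t ↔ (∀ j ∉ T, w j = 0) ∧ ∑ j, w j = t := by
  simp only [compFinset, Finset.mem_filter, Fintype.mem_piFinset, Finset.mem_range]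
  constructor
  · tauto
  · rintro ⟨h1, h2⟩
    refine ⟨fun j => ?_, h1, h2⟩
    have : w j ≤ ∑ k, w k := Finset.single_le_sum (fun k _ => Nat.zero_le _) (Finset.mem_univ j)
    omega

def qcard {d : ℕ} (T : Finset (Fin d)) (t : ℕ) : ℕ := (compFinset T t).card

lemma qcard_zero {d : ℕ} (T : Finset (Fin d)) : qcard T 0 = 1 := by
  rw [qcard, show compFinset T 0 = {fun _ => 0} from ?_, Finset.card_singleton]
  ext w
  rw [mem_compFinset, Finset.mem_singleton]
  constructor
  · rintro ⟨-, h2⟩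
    funext j
    have : w j ≤ ∑ k, w k := Finset.single_le_sum (fun k _ => Nat.zero_le _) (Finset.mem_univ j)
    omega
  · rintro rfl; simp

lemma qcard_empty {d : ℕ} (t : ℕ) : qcard (∅ : Finset (Fin d)) t = if t = 0 then 1 else 0 := by
  split_ifs with h
  · subst h; exact qcard_zero _
  · rw [qcard, Finset.card_eq_zero]
    ext w
    simp only [Finset.notMem_empty, iff_false, mem_compFinset, not_and]
    intro h1
    have hw : w = fun _ => 0 := funext fun j => h1 j (by simp)
    subst hw
    simp only [Finset.sum_const_zero]
    omega

lemma qcard_singleton {d : ℕ} (j : Fin d) (t : ℕ) : qcard {j} t = 1 := by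
  rw [qcard, show compFinset {j} t = {fun k => if k = j then t else 0} from ?_,
    Finset.card_singleton]
  ext w
  rw [mem_compFinset, Finset.mem_singleton]
  constructor
  · rintro ⟨h1, h2⟩
    funext k
    by_cases hk : k = j
    · subst hk
      have hs : ∑ x, w x = w k := Fintype.sum_eq_single k (fun x hx => h1 x (by simpa using hx))
      simp only [if_true, eq_self_iff_true]
      omega
    · simp only [if_neg hk]
      exact h1 k (by simpa using hk)
  · rintro rfl
    constructor
    · intro k hk
      simp only [Finset.mem_singleton] at hk
      simp [if_neg hk]
    · rw [Fintype.sum_eq_single j]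
      · simp
      · intro x hx; simp [if_neg hx]

lemma qcard_succ {d : ℕ} {T : Finset (Fin d)} {j : Fin d} (hj : j ∈ T) (t : ℕ) :
    qcard T (t + 1) = qcard (T.erase j) (t + 1) + qcard T t := by
  classical
  rw [qcard, ← Finset.card_filter_add_card_filter_not (p := fun w => w j = 0)]
  congr 1
  · rw [qcard]
    congr 1
    ext w
    simp only [Finset.mem_filter, mem_compFinset]
    constructor
    · rintro ⟨⟨h1, h2⟩, h3⟩
      refine ⟨fun k hk => ?_, h2⟩
      by_cases hkj : k = j
      · subst hkj; exact h3
      · refine h1 k (fun hkT => hk ?_)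
        exact Finset.mem_erase.mpr ⟨hkj, hkT⟩
    · rintro ⟨h1, h2⟩
      have hj0 : w j = 0 := h1 j (by simp)
      exact ⟨⟨fun k hk => h1 k (fun hke => hk (Finset.mem_of_mem_erase hke)), h2⟩, hj0⟩
  · rw [qcard]
    apply Finset.card_nbij' (i := fun w => Function.update w j (w j - 1))
      (j := fun w => Function.update w j (w j + 1))
    · intro w hw
      simp only [Finset.mem_coe, Finset.mem_filter, mem_compFinset] at hw ⊢
      obtain ⟨⟨h1, h2⟩, h3⟩ := hw
      refine ⟨fun k hk => ?_, ?_⟩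
      · have hkj : k ≠ j := fun h => hk (h ▸ hj)
        rw [Function.update_of_ne hkj]
        exact h1 k hk
      · rw [Finset.sum_update_of_mem (Finset.mem_univ j)]
        rw [Finset.sum_eq_sum_sdiff_singleton_add (Finset.mem_univ j)] at h2
        omega
    · intro w hw
      simp only [Finset.mem_coe, Finset.mem_filter, mem_compFinset] at hw ⊢
      obtain ⟨h1, h2⟩ := hw
      refine ⟨⟨fun k hk => ?_, ?_⟩, by simp⟩
      · have hkj : k ≠ j := fun h => hk (h ▸ hj)
        rw [Function.update_of_ne hkj]
        exact h1 k hk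
      · rw [Finset.sum_update_of_mem (Finset.mem_univ j)]
        rw [Finset.sum_eq_sum_sdiff_singleton_add (Finset.mem_univ j)] at h2
        omega
    · intro w hw
      simp only [Finset.mem_coe, Finset.mem_filter, mem_compFinset] at hw
      funext k
      by_cases hk : k = j
      · subst hk; simp; omega
      · simp [Function.update_of_ne hk]
    · intro w hw
      funext k
      by_cases hk : k = j
      · subst hk; simp
      · simp [Function.update_of_ne hk]

lemma qcard_eq_choose {d : ℕ} : ∀ (c : ℕ) (T : Finset (Fin d)), T.card = c + 1 →
    ∀ t, qcard T t = (t + c).choose c := by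
  intro c
  induction c with
  | zero =>
    intro T hT t
    obtain ⟨j, rfl⟩ := Finset.card_eq_one.mp hT
    simp [qcard_singleton]
  | succ c ih =>
    intro T hT
    obtain ⟨j, hj⟩ : ∃ j, j ∈ T := Finset.card_pos.mp (by omega) |>.imp (fun _ h => h)
    have herase : (T.erase j).card = c + 1 := by
      rw [Finset.card_erase_of_mem hj, hT]
      omega
    intro t
    induction t with
    | zero => rw [qcard_zero, Nat.zero_add, Nat.choose_self]
    | succ t iht =>
      rw [qcard_succ hj, ih (T.erase j) herase (t+1), iht]
      have : (t + 1 + (c + 1)).choose (c + 1) = (t + (c+1)).choose c + (t + (c+1)).choose (c+1) := by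
        rw [show t + 1 + (c + 1) = (t + (c+1)) + 1 by omega, Nat.choose_succ_succ']
      rw [this]
      congr 2
      omega

def phi {d : ℕ} (T : Finset (Fin d)) (a : ℤ) : ℕ → ℝ := fun l =>
  if a ≤ (l : ℤ) then (qcard T ((l : ℤ) - a).toNat : ℝ) else 0

lemma fdiff_phi {d : ℕ} {T : Finset (Fin d)} {j : Fin d} (hj : j ∈ T) (a : ℤ) :
    fdiff (phi T a) = phi (T.erase j) (a - 1) := by
  funext l
  simp only [fdiff, phi]
  by_cases h1 : a ≤ (l : ℤ)
  · rw [if_pos h1, if_pos (by push_cast; omega), if_pos (by omega)]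
    have e1 : ((l : ℤ) + 1 - a).toNat = ((l : ℤ) - a).toNat + 1 := by omega
    push_cast
    rw [e1, qcard_succ hj]
    have e2 : ((l : ℤ) - (a - 1)).toNat = ((l : ℤ) - a).toNat + 1 := by omega
    rw [e2]
    push_cast
    ring
  · by_cases h2 : a = (l : ℤ) + 1
    · rw [if_neg h1, if_pos (by push_cast; omega), if_pos (by omega)]
      have e1 : ((l : ℤ) + 1 - a).toNat = 0 := by omega
      have e2 : ((l : ℤ) - (a - 1)).toNat = 0 := by omega
      push_cast
      rw [e1, e2, qcard_zero, qcard_zero]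
      norm_num
    · rw [if_neg h1, if_neg (by push_cast; omega), if_neg (by omega)]
      ring

lemma fdiff_iter_phi {d : ℕ} : ∀ (k : ℕ) (T : Finset (Fin d)) (a : ℤ), k ≤ T.card →
    ∃ T', T' ⊆ T ∧ T'.card = T.card - k ∧ fdiff^[k] (phi T a) = phi T' (a - k) := by
  intro k
  induction k with
  | zero => intro T a _; exact ⟨T, Finset.Subset.refl T, by simp, by simp⟩
  | succ k ih =>
    intro T a hk
    obtain ⟨j, hj⟩ : ∃ j, j ∈ T := Finset.card_pos.mp (by omega) |>.imp (fun _ h => h)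
    rw [Function.iterate_succ_apply, fdiff_phi hj]
    obtain ⟨T', hsub, hcard, heq⟩ := ih (T.erase j) (a - 1)
      (by rw [Finset.card_erase_of_mem hj]; omega)
    refine ⟨T', hsub.trans (Finset.erase_subset j T), ?_, ?_⟩
    · rw [hcard, Finset.card_erase_of_mem hj]; omega
    · rw [heq]
      congr 1
      push_cast
      ring

lemma phi_empty {d : ℕ} (a : ℤ) : phi (∅ : Finset (Fin d)) a = chi a := by
  funext l
  simp only [phi, chi, qcard_empty]
  by_cases h : a ≤ (l : ℤ)
  · rw [if_pos h]
    by_cases h2 : (l : ℤ) = a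
    · rw [if_pos h2, if_pos (by omega)]; simp
    · rw [if_neg h2, if_neg (by omega)]; simp
  · rw [if_neg h, if_neg (by omega)]

lemma mem_levelFinset {d l : ℕ} {i : Fin d → ℕ} :
    i ∈ levelFinset d l ↔ ∑ k, i k = l := by
  simp only [levelFinset, Finset.mem_filter, Fintype.mem_piFinset, Finset.mem_range]
  constructor
  · tauto
  · intro h
    refine ⟨fun j => ?_, h⟩
    have : i j ≤ ∑ k, i k := Finset.single_le_sum (fun k _ => Nat.zero_le _) (Finset.mem_univ j)
    omega

lemma fiber_card {d l : ℕ} {J : Finset (Fin d)} {m : Fin d → ℕ} (hm : ∀ j ∉ J, m j = 0) :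
    (((levelFinset d l).filter (fun i => ∀ j ∈ J, i j = m j)).card : ℝ)
      = phi Jᶜ ((∑ j, m j : ℕ) : ℤ) l := by
  classical
  by_cases hml : (∑ j, m j) ≤ l
  · rw [phi, if_pos (by exact_mod_cast Nat.cast_le.mpr hml),
      show (((l:ℕ) : ℤ) - ((∑ j, m j : ℕ) : ℤ)).toNat = l - ∑ j, m j by omega]
    norm_cast
    apply Finset.card_nbij' (i := fun i k => if k ∈ J then 0 else i k)
      (j := fun w k => m k + w k)
    · intro i hi
      simp only [Finset.mem_coe, Finset.mem_filter, mem_levelFinset] at hi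
      obtain ⟨h1, h2⟩ := hi
      rw [Finset.mem_coe, mem_compFinset]
      constructor
      · intro k hk
        rw [Finset.mem_compl, not_not] at hk
        simp [hk]
      · have hadd : (∑ k, (if k ∈ J then 0 else i k)) + ∑ k, (if k ∈ J then i k else 0)
            = ∑ k, i k := by
          rw [← Finset.sum_add_distrib]
          apply Finset.sum_congr rfl
          intro k _
          split_ifs <;> omega
        have : ∑ k, (if k ∈ J then 0 else i k) = (∑ k, i k) - ∑ k, (if k ∈ J then i k else 0) := by
          omega
        rw [this, h1]
        congr 1
        rw [← Finset.sum_filter]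
        rw [← Finset.sum_filter_add_sum_filter_not Finset.univ (· ∈ J) m] at *
        have hz : ∑ k ∈ Finset.univ.filter (fun k => ¬ k ∈ J), m k = 0 :=
          Finset.sum_eq_zero (fun k hk => hm k (Finset.mem_filter.mp hk).2)
        have hsame : ∑ k ∈ Finset.univ.filter (· ∈ J), i k
            = ∑ k ∈ Finset.univ.filter (· ∈ J), m k :=
          Finset.sum_congr rfl (fun k hk => h2 k (Finset.mem_filter.mp hk).2)
        omega
    · intro w hw
      rw [Finset.mem_coe, mem_compFinset] at hw
      obtain ⟨h1, h2⟩ := hw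
      simp only [Finset.mem_coe, Finset.mem_filter, mem_levelFinset]
      constructor
      · rw [Finset.sum_add_distrib, h2]
        have hmm : ∑ j, m j = ∑ k ∈ Finset.univ.filter (· ∈ J), m k := by
          rw [← Finset.sum_filter_add_sum_filter_not Finset.univ (· ∈ J) m]
          have hz : ∑ k ∈ Finset.univ.filter (fun k => ¬ k ∈ J), m k = 0 :=
            Finset.sum_eq_zero (fun k hk => hm k (Finset.mem_filter.mp hk).2)
          omega
        omega
      · intro k hk
        have : w k = 0 := h1 k (by simpa using hk)
        omega
    · intro i hi
      simp only [Finset.mem_coe, Finset.mem_filter, mem_levelFinset] at hi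
      funext k
      by_cases hk : k ∈ J
      · simp only [if_pos hk]
        rw [hi.2 k hk]
        omega
      · simp only [if_neg hk, hm k hk, Nat.zero_add]
    · intro w hw
      rw [Finset.mem_coe, mem_compFinset] at hw
      funext k
      by_cases hk : k ∈ J
      · have : w k = 0 := hw.1 k (by simpa using hk)
        simp [if_pos hk, this]
      · simp [if_neg hk, hm k hk]
  · rw [phi, if_neg (by omega)]
    norm_cast
    rw [Finset.card_eq_zero]
    ext i
    simp only [Finset.mem_filter, mem_levelFinset, Finset.notMem_empty, iff_false, not_and]
    intro h1 h2
    have hle : ∑ j, m j ≤ ∑ j, i j := by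
      apply Finset.sum_le_sum
      intro k _
      by_cases hk : k ∈ J
      · rw [h2 k hk]
      · rw [hm k hk]; omega
    omega

lemma choose_prod_formula (a : ℕ) : ∀ (k : ℕ),
    (((a + k).choose k : ℕ) : ℝ) = ∏ t ∈ Finset.range k, (((a : ℝ) + t + 1) / (t + 1)) := by
  intro k
  induction k with
  | zero => simp
  | succ k ih =>
    rw [show a + (k + 1) = a + k + 1 by omega]
    rw [Finset.prod_range_succ, ← ih]
    have key := Nat.add_one_mul_choose_eq (a + k) k
    have keyR : ((a : ℝ) + k + 1) * ((a + k).choose k : ℕ) =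
        (((a + k + 1).choose (k+1) : ℕ) : ℝ) * ((k : ℝ) + 1) := by
      exact_mod_cast congrArg (fun x : ℕ => (x : ℝ)) key
    have hk1 : ((k : ℝ) + 1) ≠ 0 := by positivity
    rw [mul_div_assoc']
    rw [eq_div_iff hk1]
    linear_combination (-1 : ℝ) * keyR

lemma harmonic_le_log : ∀ (k : ℕ), 1 ≤ k →
    ∑ t ∈ Finset.range k, (1 : ℝ) / (t + 1) ≤ 1 + Real.log k := by
  intro k
  induction k with
  | zero => omega
  | succ k ih =>
    intro _
    by_cases hk : 1 ≤ k
    · rw [Finset.sum_range_succ]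
      have h1 : (1 : ℝ) / (k + 1) ≤ Real.log (k + 1) - Real.log k := by
        have hklt : (0 : ℝ) < k := by exact_mod_cast hk
        have hx : (0 : ℝ) < (k : ℝ) / (k + 1) := by positivity
        have hthis := Real.log_le_sub_one_of_pos hx
        rw [Real.log_div (by positivity) (by positivity)] at hthis
        have he : (k : ℝ)/(k+1) - 1 = -(1/(k+1)) := by field_simp; ring
        rw [he] at hthis
        linarith
      have h2 := ih hk
      push_cast
      push_cast at h2
      linarith
    · have hk0 : k = 0 := by omega
      subst hk0
      simp [Real.log_one]

lemma prod_le_pow_avg (k : ℕ) (hk : 1 ≤ k) (z : ℕ → ℝ) (hz : ∀ t ∈ Finset.range k, 0 < z t)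
    (A : ℝ) (hA : 0 < A) (havg : ∑ t ∈ Finset.range k, z t ≤ k * A) :
    ∏ t ∈ Finset.range k, z t ≤ A ^ k := by
  have hprodpos : 0 < ∏ t ∈ Finset.range k, z t := Finset.prod_pos hz
  have hlog : Real.log (∏ t ∈ Finset.range k, z t) ≤ k * Real.log A := by
    rw [Real.log_prod (fun t ht => (hz t ht).ne')]
    have hterm : ∀ t ∈ Finset.range k, Real.log (z t) ≤ Real.log A + z t / A - 1 := by
      intro t ht
      have hx : 0 < z t / A := div_pos (hz t ht) hA
      have hthis := Real.log_le_sub_one_of_pos hx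
      rw [Real.log_div (hz t ht).ne' hA.ne'] at hthis
      linarith
    calc ∑ t ∈ Finset.range k, Real.log (z t)
        ≤ ∑ t ∈ Finset.range k, (Real.log A + z t / A - 1) := Finset.sum_le_sum hterm
      _ = k * Real.log A + (∑ t ∈ Finset.range k, z t) / A - k := by
          rw [Finset.sum_sub_distrib, Finset.sum_add_distrib]
          simp [Finset.sum_div]
      _ ≤ k * Real.log A + (k * A) / A - k := by gcongr
      _ = k * Real.log A := by field_simp; ring
  calc ∏ t ∈ Finset.range k, z t = Real.exp (Real.log (∏ t ∈ Finset.range k, z t)) :=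
        (Real.exp_log hprodpos).symm
    _ ≤ Real.exp (k * Real.log A) := Real.exp_le_exp.mpr hlog
    _ = A ^ k := by rw [Real.exp_nat_mul, Real.exp_log hA]

lemma choose_le_avg_pow (a k : ℕ) (hk : 1 ≤ k) :
    (((a + k).choose k : ℕ) : ℝ) ≤ (1 + (a : ℝ) * (1 + Real.log k) / k) ^ k := by
  rw [choose_prod_formula]
  have hkpos : (0 : ℝ) < k := by exact_mod_cast hk
  have hlogk : 0 ≤ Real.log k := Real.log_nonneg (by exact_mod_cast hk)
  have hApos : (0 : ℝ) < 1 + (a : ℝ) * (1 + Real.log k) / k := by positivity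
  apply prod_le_pow_avg k hk _ (fun t ht => by positivity) _ hApos
  have hterm : ∀ t : ℕ, ((a : ℝ) + t + 1) / (t + 1) = 1 + (a : ℝ) * (1 / (t + 1)) := by
    intro t
    have ht1 : ((t : ℝ) + 1) ≠ 0 := by positivity
    field_simp
    ring
  calc ∑ t ∈ Finset.range k, (((a : ℝ) + t + 1) / (t + 1))
      = ∑ t ∈ Finset.range k, (1 + (a : ℝ) * (1 / (t + 1))) :=
        Finset.sum_congr rfl (fun t _ => hterm t)
    _ = k + (a : ℝ) * ∑ t ∈ Finset.range k, (1 : ℝ) / (t + 1) := by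
        rw [Finset.sum_add_distrib, Finset.mul_sum]
        simp
    _ ≤ k + (a : ℝ) * (1 + Real.log k) := by
        have := harmonic_le_log k hk
        have ha0 : (0:ℝ) ≤ a := Nat.cast_nonneg a
        nlinarith
    _ = k * (1 + (a : ℝ) * (1 + Real.log k) / k) := by field_simp

lemma choose_add_mono (a : ℕ) : ∀ {j j' : ℕ}, j ≤ j' → (a + j).choose j ≤ (a + j').choose j' := by
  intro j j' h
  induction j' with
  | zero => interval_cases j; simp
  | succ j' ih =>
    rcases Nat.lt_or_ge j (j' + 1) with h' | h'
    · have := ih (by omega)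
      calc (a + j).choose j ≤ (a + j').choose j' := this
        _ ≤ (a + (j' + 1)).choose (j' + 1) := by
            rw [show a + (j' + 1) = (a + j') + 1 by ring, Nat.choose_succ_succ']
            omega
    · have : j = j' + 1 := by omega
      subst this
      rfl

/-- Improved (logarithmic) error bound for the combination technique
(Corollary `supiAbsch`). -/
theorem combination_error_bound_improved (d p : ℕ) (hd : 2 ≤ d) (hp : 1 ≤ p)
    (K : ℝ) (hK : 0 ≤ K) (u : ℝ) (U : (Fin d → ℕ) → ℝ)
    (v : Finset (Fin d) → (Fin d → ℕ) → ℝ)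
    (hdep : ∀ (J : Finset (Fin d)) (i i' : Fin d → ℕ),
      (∀ j ∈ J, i j = i' j) → v J i = v J i')
    (hbound : ∀ (J : Finset (Fin d)) (i : Fin d → ℕ), |v J i| ≤ K)
    (hexp : ∀ i : Fin d → ℕ,
      u - U i = ∑ J ∈ Finset.univ.filter (fun J : Finset (Fin d) => J.Nonempty),
        v J i * ∏ j ∈ J, ((1 : ℝ) / 2) ^ (p * i j)) :
    ∀ n : ℕ,
      |u - fdiff^[d - 1] (fun l => ∑ i ∈ levelFinset d l, U i) n|
        ≤ 2 * K * (((2 : ℝ) ^ p + 1) / (2 : ℝ) ^ (p - 1)) ^ (d - 1) *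
            (1 + ((n : ℝ) + (d : ℝ) - 1) * (1 + Real.log ((d : ℝ) - 1)) / ((d : ℝ) - 1))
              ^ (d - 1) *
            ((1 : ℝ) / 2) ^ (p * n) := by
  intro n
  classical
  set x : ℝ := ((1 : ℝ) / 2) ^ p with hxdef
  have hx0 : 0 < x := by positivity
  set S : ℕ → ℝ := fun l => ∑ i ∈ levelFinset d l, U i with hSdef
  set NE : Finset (Finset (Fin d)) :=
    Finset.univ.filter (fun J : Finset (Fin d) => J.Nonempty) with hNE
  set NN : ℕ := ((n + d - 1) + (d - 1)).choose (d - 1) with hNN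
  set B : ℝ := 1 + ((n : ℝ) + (d : ℝ) - 1) * (1 + Real.log ((d : ℝ) - 1)) / ((d : ℝ) - 1)
    with hB
  set EJ : Finset (Fin d) → ℕ → ℝ :=
    fun J l => ∑ i ∈ levelFinset d l, v J i * ∏ j ∈ J, ((1 : ℝ) / 2) ^ (p * i j) with hEJ
  -- counting function equals phi univ 0
  have hcnt : ∀ l, ((levelFinset d l).card : ℝ) = phi (Finset.univ : Finset (Fin d)) 0 l := by
    intro l
    rw [phi]
    rw [if_pos (by omega : (0 : ℤ) ≤ (l : ℤ))]
    have h1 : compFinset (Finset.univ : Finset (Fin d)) l = levelFinset d l := by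
      ext w
      rw [mem_compFinset, mem_levelFinset]
      simp
    rw [show (((l : ℕ) : ℤ) - 0).toNat = l by omega]
    rw [qcard, h1]
  have hdiffcnt : fdiff^[d - 1] (fun l => ((levelFinset d l).card : ℝ)) n = 1 := by
    obtain ⟨T', hsub, hcard, heq⟩ := fdiff_iter_phi (d - 1)
      (Finset.univ : Finset (Fin d)) 0 (by simp [Finset.card_univ])
    rw [show (fun l => ((levelFinset d l).card : ℝ))
        = phi (Finset.univ : Finset (Fin d)) 0 from funext hcnt, heq]
    have hcard1 : T'.card = 1 := by
      rw [hcard, Finset.card_univ, Fintype.card_fin]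
      omega
    obtain ⟨j, rfl⟩ := Finset.card_eq_one.mp hcard1
    rw [phi, if_pos (by push_cast; omega), qcard_singleton]
    norm_num
  -- split into per-J terms
  have hsplit : u - fdiff^[d - 1] S n = ∑ J ∈ NE, fdiff^[d - 1] (EJ J) n := by
    have h2 := fdiff_iterate_sub (d - 1) (fun l => u * ((levelFinset d l).card : ℝ)) S n
    have h3 := fdiff_iterate_const_mul (d - 1) u (fun l => ((levelFinset d l).card : ℝ)) n
    rw [hdiffcnt, mul_one] at h3
    have h4 : (fun l => u * ((levelFinset d l).card : ℝ) - S l) = fun l => ∑ J ∈ NE, EJ J l := by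
      funext l
      calc u * ((levelFinset d l).card : ℝ) - S l
          = ∑ i ∈ levelFinset d l, (u - U i) := by
            rw [Finset.sum_sub_distrib, Finset.sum_const, nsmul_eq_mul, mul_comm]
        _ = ∑ i ∈ levelFinset d l, ∑ J ∈ NE,
              v J i * ∏ j ∈ J, ((1 : ℝ) / 2) ^ (p * i j) :=
            Finset.sum_congr rfl (fun i _ => hexp i)
        _ = ∑ J ∈ NE, EJ J l := Finset.sum_comm
    rw [h4] at h2
    rw [fdiff_iterate_sum (d - 1) NE EJ n] at h2
    rw [h3] at h2
    linarith
  -- per-J bound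
  have hJbound : ∀ J : Finset (Fin d), J.Nonempty →
      |fdiff^[d - 1] (EJ J) n|
        ≤ K * NN * (x ^ (n + (d - J.card)) * (x + 1) ^ (J.card - 1)) := by
    intro J hJne
    have hs1 : 1 ≤ J.card := Finset.card_pos.mpr hJne
    have hsd : J.card ≤ d := by
      have := Finset.card_le_univ J
      rwa [Fintype.card_fin] at this
    set s : ℕ := J.card with hs
    set r : ℕ := d - s with hr
    set M : Finset (Fin d → ℕ) := (Fintype.piFinset fun _ : Fin d => Finset.range (n + d)).filter
        (fun m => (∀ j ∉ J, m j = 0) ∧ ∑ j, m j ≤ n + d - 1) with hM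
    have hmemM : ∀ m ∈ M, (∀ j ∉ J, m j = 0) ∧ ∑ j, m j ≤ n + d - 1 := by
      intro m hm
      exact (Finset.mem_filter.mp hm).2
    -- window equality
    have hwin : ∀ l, n ≤ l → l ≤ n + (d - 1) → EJ J l
        = ∑ m ∈ M, (v J m * x ^ (∑ j, m j)) * phi Jᶜ ((∑ j, m j : ℕ) : ℤ) l := by
      intro l hl1 hl2
      have hmaps : ∀ i ∈ levelFinset d l, (fun k => if k ∈ J then i k else 0) ∈ M := by
        intro i hi
        rw [mem_levelFinset] at hi
        rw [hM, Finset.mem_filter, Fintype.mem_piFinset]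
        refine ⟨fun k => ?_, fun k hk => by simp [if_neg hk], ?_⟩
        · rw [Finset.mem_range]
          have : i k ≤ ∑ j, i j :=
            Finset.single_le_sum (fun _ _ => Nat.zero_le _) (Finset.mem_univ k)
          split_ifs <;> omega
        · calc ∑ k, (if k ∈ J then i k else 0) ≤ ∑ k, i k :=
              Finset.sum_le_sum (fun k _ => by split_ifs <;> omega)
            _ ≤ n + d - 1 := by omega
      have hkey := Finset.sum_fiberwise_of_maps_to' hmaps (fun m => v J m * x ^ (∑ j, m j))
      calc EJ J l
          = ∑ i ∈ levelFinset d l,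
              v J (fun k => if k ∈ J then i k else 0)
                * x ^ (∑ k, (if k ∈ J then i k else 0)) := by
            apply Finset.sum_congr rfl
            intro i _
            congr 1
            · exact hdep J i _ (fun j hj => by simp [if_pos hj])
            · calc ∏ j ∈ J, ((1 : ℝ) / 2) ^ (p * i j)
                  = ∏ j ∈ J, x ^ (i j) :=
                    Finset.prod_congr rfl (fun j _ => by rw [hxdef, ← pow_mul])
                _ = x ^ (∑ j ∈ J, i j) := Finset.prod_pow_eq_pow_sum _ _ _
                _ = x ^ (∑ k, (if k ∈ J then i k else 0)) := by
                    rw [Finset.sum_ite_mem, Finset.univ_inter]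
        _ = ∑ m ∈ M, ∑ i ∈ (levelFinset d l).filter
              (fun i => (fun k => if k ∈ J then i k else 0) = m),
              (v J m * x ^ (∑ j, m j)) := hkey.symm
        _ = ∑ m ∈ M, (v J m * x ^ (∑ j, m j)) * phi Jᶜ ((∑ j, m j : ℕ) : ℤ) l := by
            apply Finset.sum_congr rfl
            intro m hm
            rw [Finset.sum_const, nsmul_eq_mul]
            have hfe : (levelFinset d l).filter
                (fun i => (fun k => if k ∈ J then i k else 0) = m)
                = (levelFinset d l).filter (fun i => ∀ j ∈ J, i j = m j) := by
              ext i
              simp only [Finset.mem_filter]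
              constructor
              · rintro ⟨hi, heq⟩
                refine ⟨hi, fun j hj => ?_⟩
                rw [← heq]
                simp [if_pos hj]
              · rintro ⟨hi, hagree⟩
                refine ⟨hi, funext fun k => ?_⟩
                by_cases hk : k ∈ J
                · simp only [if_pos hk]
                  exact hagree k hk
                · simp only [if_neg hk]
                  exact ((hmemM m hm).1 k hk).symm
            rw [hfe, ← fiber_card (hmemM m hm).1, mul_comm]
    -- reduce to chi differences
    have hstep : fdiff^[d - 1] (EJ J) n = ∑ m ∈ M,
        (v J m * x ^ (∑ j, m j)) * fdiff^[s - 1] (chi (((∑ j, m j : ℕ) : ℤ) - (r : ℕ))) n := by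
      rw [fdiff_iterate_congr (d - 1) (EJ J) _ n hwin]
      rw [fdiff_iterate_sum (d - 1) M
        (fun m l => (v J m * x ^ (∑ j, m j)) * phi Jᶜ ((∑ j, m j : ℕ) : ℤ) l) n]
      apply Finset.sum_congr rfl
      intro m _
      rw [fdiff_iterate_const_mul]
      congr 1
      have hcompl : (Jᶜ : Finset (Fin d)).card = r := by
        rw [Finset.card_compl, Fintype.card_fin]
      have hd1 : d - 1 = (s - 1) + r := by omega
      rw [hd1, Function.iterate_add_apply]
      obtain ⟨T', hsub, hcard, heq⟩ := fdiff_iter_phi r Jᶜ ((∑ j, m j : ℕ) : ℤ)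
        (le_of_eq hcompl.symm)
      rw [heq]
      have hT'e : T' = ∅ := Finset.card_eq_zero.mp (by rw [hcard, hcompl]; omega)
      rw [hT'e, phi_empty]
    -- absolute-value bound, term by term
    have habs : |fdiff^[d - 1] (EJ J) n| ≤ ∑ m ∈ M,
        (if n + r ≤ ∑ j, m j then
          K * x ^ (∑ j, m j) * (((s - 1).choose (∑ j, m j - (n + r)) : ℕ) : ℝ) else 0) := by
      rw [hstep]
      refine (Finset.abs_sum_le_sum_abs _ _).trans (Finset.sum_le_sum ?_)
      intro m _
      by_cases hcase : n + r ≤ ∑ j, m j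
      · rw [if_pos hcase, abs_mul]
        have h1 : |v J m * x ^ (∑ j, m j)| ≤ K * x ^ (∑ j, m j) := by
          rw [abs_mul, abs_of_nonneg (le_of_lt (pow_pos hx0 _))]
          exact mul_le_mul_of_nonneg_right (hbound J m) (le_of_lt (pow_pos hx0 _))
        have h2 := fdiff_iter_chi_bound (s - 1) n (((∑ j, m j : ℕ) : ℤ) - (r : ℕ))
        rw [show ((((∑ j, m j : ℕ) : ℤ) - (r : ℕ)) - (n : ℕ)).toNat
            = ∑ j, m j - (n + r) by omega] at h2
        exact mul_le_mul h1 h2 (abs_nonneg _) (by positivity)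
      · rw [if_neg hcase]
        rw [fdiff_iter_chi_zero (s - 1) n (((∑ j, m j : ℕ) : ℤ) - (r : ℕ))
          (Or.inl (by omega)), mul_zero, abs_zero]
    -- group by level
    have hgroup : (∑ m ∈ M,
        (if n + r ≤ ∑ j, m j then
          K * x ^ (∑ j, m j) * (((s - 1).choose (∑ j, m j - (n + r)) : ℕ) : ℝ) else 0))
        ≤ K * NN * (x ^ (n + r) * (x + 1) ^ (s - 1)) := by
      rw [← Finset.sum_filter]
      set F : Finset (Fin d → ℕ) := M.filter (fun m => n + r ≤ ∑ j, m j) with hF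
      have hmemF : ∀ m ∈ F, m ∈ M ∧ n + r ≤ ∑ j, m j := fun m hm => Finset.mem_filter.mp hm
      have hmaps2 : ∀ m ∈ F, (∑ j, m j) - (n + r) ∈ Finset.range s := by
        intro m hm
        obtain ⟨hmM, hge⟩ := hmemF m hm
        have := (hmemM m hmM).2
        rw [Finset.mem_range]
        omega
      have hfibercard : ∀ q ∈ Finset.range s,
          ((F.filter (fun m => (∑ j, m j) - (n + r) = q)).card : ℝ) ≤ (NN : ℝ) := by
        intro q hq
        rw [Finset.mem_range] at hq
        have hsubset : F.filter (fun m => (∑ j, m j) - (n + r) = q)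
            ⊆ compFinset J (n + r + q) := by
          intro m hm
          rw [Finset.mem_filter] at hm
          obtain ⟨hmF, hq'⟩ := hm
          obtain ⟨hmM, hge⟩ := hmemF m hmF
          rw [mem_compFinset]
          exact ⟨(hmemM m hmM).1, by omega⟩
        have hcard2 : qcard J (n + r + q) = ((n + r + q) + (s - 1)).choose (s - 1) :=
          qcard_eq_choose (s - 1) J (by omega) (n + r + q)
        have hcard3 : ((n + r + q) + (s - 1)).choose (s - 1)
            ≤ ((n + d - 1) + (s - 1)).choose (s - 1) :=
          Nat.choose_le_choose (s - 1) (by omega)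
        have hcard4 : ((n + d - 1) + (s - 1)).choose (s - 1) ≤ NN :=
          choose_add_mono (n + d - 1) (by omega)
        have hcard5 : qcard J (n + r + q) ≤ NN := by
          rw [hcard2]; exact le_trans hcard3 hcard4
        have hcard1 : (F.filter (fun m => (∑ j, m j) - (n + r) = q)).card
            ≤ qcard J (n + r + q) := Finset.card_le_card hsubset
        exact_mod_cast le_trans hcard1 hcard5
      have hkey2 := Finset.sum_fiberwise_of_maps_to' hmaps2
        (fun q => K * x ^ (n + r + q) * (((s - 1).choose q : ℕ) : ℝ))
      have e1 : ∑ m ∈ F, K * x ^ (∑ j, m j) * (((s - 1).choose (∑ j, m j - (n + r)) : ℕ) : ℝ)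
          = ∑ m ∈ F, K * x ^ (n + r + ((∑ j, m j) - (n + r)))
              * (((s - 1).choose ((∑ j, m j) - (n + r)) : ℕ) : ℝ) := by
        apply Finset.sum_congr rfl
        intro m hm
        rw [show n + r + ((∑ j, m j) - (n + r)) = ∑ j, m j by
          have := (hmemF m hm).2; omega]
      rw [e1, ← hkey2]
      calc ∑ q ∈ Finset.range s, ∑ m ∈ F.filter (fun m => (∑ j, m j) - (n + r) = q),
            (K * x ^ (n + r + q) * (((s - 1).choose q : ℕ) : ℝ))
          ≤ ∑ q ∈ Finset.range s,
            (NN : ℝ) * (K * x ^ (n + r + q) * (((s - 1).choose q : ℕ) : ℝ)) := by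
            apply Finset.sum_le_sum
            intro q hq
            rw [Finset.sum_const, nsmul_eq_mul]
            apply mul_le_mul_of_nonneg_right (hfibercard q hq) (by positivity)
        _ = K * (NN : ℝ) * x ^ (n + r)
            * ∑ q ∈ Finset.range s, x ^ q * (((s - 1).choose q : ℕ) : ℝ) := by
            rw [Finset.mul_sum]
            apply Finset.sum_congr rfl
            intro q _
            rw [pow_add]
            ring
        _ = K * NN * (x ^ (n + r) * (x + 1) ^ (s - 1)) := by
            have hbinom : ∑ q ∈ Finset.range s, x ^ q * (((s - 1).choose q : ℕ) : ℝ)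
                = (x + 1) ^ (s - 1) := by
              have hap := add_pow x 1 (s - 1)
              simp only [one_pow, mul_one] at hap
              rw [show s - 1 + 1 = s by omega] at hap
              exact hap.symm
            rw [hbinom]
            ring
    exact habs.trans hgroup
  -- sum over J
  have hNEsum : ∑ J ∈ NE, (x ^ (d - J.card) * (x + 1) ^ J.card) ≤ ((x + 1) + x) ^ d := by
    calc ∑ J ∈ NE, (x ^ (d - J.card) * (x + 1) ^ J.card)
        ≤ ∑ J ∈ (Finset.univ : Finset (Finset (Fin d))),
            (x ^ (d - J.card) * (x + 1) ^ J.card) :=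
          Finset.sum_le_sum_of_subset_of_nonneg (Finset.filter_subset _ _)
            (fun J _ _ => by positivity)
      _ = ∑ t ∈ (Finset.univ : Finset (Fin d)).powerset,
            (∏ _i ∈ t, (x + 1)) * ∏ _i ∈ (Finset.univ : Finset (Fin d)) \ t, x := by
          rw [Finset.powerset_univ]
          apply Finset.sum_congr rfl
          intro t _
          rw [Finset.prod_const, Finset.prod_const,
            Finset.card_sdiff_of_subset (Finset.subset_univ t), Finset.card_univ, Fintype.card_fin,
            mul_comm]
      _ = ∏ _i ∈ (Finset.univ : Finset (Fin d)), ((x + 1) + x) :=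
          (Finset.prod_add (fun _ : Fin d => (x + 1)) (fun _ : Fin d => x) Finset.univ).symm
      _ = ((x + 1) + x) ^ d := by
          rw [Finset.prod_const, Finset.card_univ, Fintype.card_fin]
  have hNNB : (NN : ℝ) ≤ B ^ (d - 1) := by
    have h := choose_le_avg_pow (n + d - 1) (d - 1) (by omega)
    have e1 : ((n + d - 1 : ℕ) : ℝ) = (n : ℝ) + (d : ℝ) - 1 := by
      rw [Nat.cast_sub (by omega)]
      push_cast
      ring
    have e2 : ((d - 1 : ℕ) : ℝ) = (d : ℝ) - 1 := by
      rw [Nat.cast_sub (by omega)]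
      push_cast
      ring
    calc (NN : ℝ)
        ≤ (1 + ((n + d - 1 : ℕ) : ℝ) * (1 + Real.log ((d - 1 : ℕ) : ℝ))
            / ((d - 1 : ℕ) : ℝ)) ^ (d - 1) := h
      _ = B ^ (d - 1) := by rw [e1, e2, hB]
  have hRHS : 2 * K * (((2 : ℝ) ^ p + 1) / (2 : ℝ) ^ (p - 1)) ^ (d - 1) * B ^ (d - 1)
        * ((1 : ℝ) / 2) ^ (p * n)
      = K * B ^ (d - 1) * x ^ n * ((2 : ℝ) ^ d * (x + 1) ^ (d - 1)) := by
    have h2p : ((2 : ℝ) ^ p + 1) / (2 : ℝ) ^ (p - 1) = 2 * (x + 1) := by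
      have hp2 : (2 : ℝ) ^ p = (2 : ℝ) ^ (p - 1) * 2 := by
        rw [← pow_succ]
        congr 1
        omega
      have hxval : x = 1 / (2 : ℝ) ^ p := by
        rw [hxdef, div_pow, one_pow]
      have h2ne : ((2 : ℝ) ^ (p - 1)) ≠ 0 := by positivity
      have h2ne' : ((2 : ℝ) ^ p) ≠ 0 := by positivity
      rw [hxval, hp2]
      field_simp
      ring
    have hpx : ((1 : ℝ) / 2) ^ (p * n) = x ^ n := by rw [hxdef, pow_mul]
    rw [h2p, hpx, mul_pow]
    rw [show (2 : ℝ) ^ d = 2 * 2 ^ (d - 1) from by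
      rw [← pow_succ']
      congr 1
      omega]
    ring
  have hbound2 : ∀ J ∈ NE, K * NN * (x ^ (n + (d - J.card)) * (x + 1) ^ (J.card - 1))
      = (K * NN * x ^ n / (x + 1)) * (x ^ (d - J.card) * (x + 1) ^ J.card) := by
    intro J hJ
    have hJne : J.Nonempty := (Finset.mem_filter.mp hJ).2
    have hc1 : 1 ≤ J.card := Finset.card_pos.mpr hJne
    have e : (x + 1) ^ J.card = (x + 1) ^ (J.card - 1) * (x + 1) := by
      rw [← pow_succ]
      congr 1
      omega
    have hx1ne : (x + 1) ≠ 0 := by positivity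
    rw [pow_add, e]
    field_simp
  calc |u - fdiff^[d - 1] S n|
      = |∑ J ∈ NE, fdiff^[d - 1] (EJ J) n| := by rw [hsplit]
    _ ≤ ∑ J ∈ NE, |fdiff^[d - 1] (EJ J) n| := Finset.abs_sum_le_sum_abs _ _
    _ ≤ ∑ J ∈ NE, K * NN * (x ^ (n + (d - J.card)) * (x + 1) ^ (J.card - 1)) :=
        Finset.sum_le_sum (fun J hJ => hJbound J (Finset.mem_filter.mp hJ).2)
    _ = (K * NN * x ^ n / (x + 1)) * ∑ J ∈ NE, (x ^ (d - J.card) * (x + 1) ^ J.card) := by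
        rw [Finset.mul_sum]
        exact Finset.sum_congr rfl hbound2
    _ ≤ (K * NN * x ^ n / (x + 1)) * ((x + 1) + x) ^ d := by
        apply mul_le_mul_of_nonneg_left hNEsum
        positivity
    _ ≤ (K * NN * x ^ n / (x + 1)) * (2 * (x + 1)) ^ d := by
        apply mul_le_mul_of_nonneg_left _ (by positivity)
        apply pow_le_pow_left₀ (by positivity)
        linarith
    _ = K * NN * x ^ n * ((2 : ℝ) ^ d * (x + 1) ^ (d - 1)) := by
        rw [mul_pow]
        rw [show (x + 1) ^ d = (x + 1) ^ (d - 1) * (x + 1) from by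
          rw [← pow_succ]
          congr 1
          omega]
        have hx1ne : (x + 1) ≠ 0 := by positivity
        field_simp
    _ ≤ K * B ^ (d - 1) * x ^ n * ((2 : ℝ) ^ d * (x + 1) ^ (d - 1)) := by
        have hC : (0 : ℝ) ≤ (2 : ℝ) ^ d * (x + 1) ^ (d - 1) := by positivity
        have hxn : (0 : ℝ) ≤ x ^ n := by positivity
        have h1 : K * (NN : ℝ) ≤ K * B ^ (d - 1) := mul_le_mul_of_nonneg_left hNNB hK
        have h2 : K * (NN : ℝ) * x ^ n ≤ K * B ^ (d - 1) * x ^ n :=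
          mul_le_mul_of_nonneg_right h1 hxn
        exact mul_le_mul_of_nonneg_right h2 hC
    _ = 2 * K * (((2 : ℝ) ^ p + 1) / (2 : ℝ) ^ (p - 1)) ^ (d - 1) * B ^ (d - 1)
        * ((1 : ℝ) / 2) ^ (p * n) := hRHS.symm
end

section
/- Let d ≥ 1, let f : ℕ → ℝ, and define F(n) = Σ_{l=0}^{n} f(l)·binom(n−l+d−1, d−1). Then for every k with 0 ≤ k < d and every n ∈ ℕ: (δ^k F)(n) = Σ_{j=1}^{k} f(n+j)·binom(d−j−1, k−j) + Σ_{l=0}^{n} f(l)·binom(n−l+d−1, d−k−1), where the first sum is empty for k = 0 and δ is the forward difference operator. -/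
open Finset in
private lemma step_identity (d k n : ℕ) (hk : k + 1 < d) (f : ℕ → ℝ) :
    ((∑ i ∈ range k, f (n+2+i) * (Nat.choose (d-2-i) (k-1-i) : ℝ))
      + ∑ l ∈ range (n+2), f l * (Nat.choose (n+1-l+d-1) (d-k-1) : ℝ))
    - ((∑ i ∈ range k, f (n+1+i) * (Nat.choose (d-2-i) (k-1-i) : ℝ))
      + ∑ l ∈ range (n+1), f l * (Nat.choose (n-l+d-1) (d-k-1) : ℝ))
    = (∑ i ∈ range (k+1), f (n+1+i) * (Nat.choose (d-2-i) (k-i) : ℝ))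
      + ∑ l ∈ range (n+1), f l * (Nat.choose (n-l+d-1) (d-k-2) : ℝ) := by
  -- L1 : second sum difference
  have L1 : (∑ l ∈ range (n+2), f l * (Nat.choose (n+1-l+d-1) (d-k-1) : ℝ))
      = (∑ l ∈ range (n+1), f l * (Nat.choose (n-l+d-1) (d-k-1) : ℝ))
        + f (n+1) * (Nat.choose (d-1) k : ℝ)
        + ∑ l ∈ range (n+1), f l * (Nat.choose (n-l+d-1) (d-k-2) : ℝ) := by
    rw [Finset.sum_range_succ]
    have h1 : n + 1 - (n+1) + d - 1 = d - 1 := by omega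
    have h2 : Nat.choose (d-1) (d-k-1) = Nat.choose (d-1) k := by
      rw [show d-k-1 = (d-1) - k by omega]
      exact Nat.choose_symm (by omega)
    rw [h1, h2]
    have h3 : ∀ l ∈ range (n+1), f l * (Nat.choose (n+1-l+d-1) (d-k-1) : ℝ)
        = f l * (Nat.choose (n-l+d-1) (d-k-1) : ℝ)
          + f l * (Nat.choose (n-l+d-1) (d-k-2) : ℝ) := by
      intro l hl
      have hl' : l ≤ n := by simpa [Nat.lt_succ_iff] using hl
      have hn : (Nat.choose (n+1-l+d-1) (d-k-1) : ℕ)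
          = Nat.choose (n-l+d-1) (d-k-2) + Nat.choose (n-l+d-1) (d-k-1) := by
        rw [show n+1-l+d-1 = (n-l+d-1) + 1 by omega,
            show d-k-1 = (d-k-2) + 1 by omega]
        exact Nat.choose_succ_succ _ _
      rw [hn]
      push_cast
      ring
    rw [Finset.sum_congr rfl h3, Finset.sum_add_distrib]
    ring
  -- L2 : index shift on first sum
  have L2 : (∑ i ∈ range (k+1), f (n+1+i) * (Nat.choose (d-1-i) (k-i) : ℝ))
      = (∑ i ∈ range k, f (n+2+i) * (Nat.choose (d-2-i) (k-1-i) : ℝ))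
        + f (n+1) * (Nat.choose (d-1) k : ℝ) := by
    rw [Finset.sum_range_succ']
    congr 1
    · apply Finset.sum_congr rfl
      intro i _
      rw [show n+1+(i+1) = n+2+i by omega, show d-1-(i+1) = d-2-i by omega,
          show k-(i+1) = k-1-i by omega]
  -- L3 : Pascal
  have L3 : (∑ i ∈ range (k+1), f (n+1+i) * (Nat.choose (d-1-i) (k-i) : ℝ))
      = (∑ i ∈ range (k+1), f (n+1+i) * (Nat.choose (d-2-i) (k-i) : ℝ))
        + ∑ i ∈ range k, f (n+1+i) * (Nat.choose (d-2-i) (k-1-i) : ℝ) := by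
    rw [Finset.sum_range_succ, Finset.sum_range_succ (fun i => f (n+1+i) * (Nat.choose (d-2-i) (k-i) : ℝ))]
    have h0 : (Nat.choose (d-1-k) (k-k) : ℝ) = (Nat.choose (d-2-k) (k-k) : ℝ) := by
      rw [show k - k = 0 by omega]
      simp
    have h4 : ∀ i ∈ range k, f (n+1+i) * (Nat.choose (d-1-i) (k-i) : ℝ)
        = f (n+1+i) * (Nat.choose (d-2-i) (k-i) : ℝ)
          + f (n+1+i) * (Nat.choose (d-2-i) (k-1-i) : ℝ) := by
      intro i hi
      have hi' : i < k := by simpa using hi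
      have hn : Nat.choose (d-1-i) (k-i)
          = Nat.choose (d-2-i) (k-1-i) + Nat.choose (d-2-i) (k-i) := by
        rw [show d-1-i = (d-2-i) + 1 by omega, show k-i = (k-1-i) + 1 by omega]
        exact Nat.choose_succ_succ _ _
      rw [hn]
      push_cast
      ring
    rw [Finset.sum_congr rfl h4, Finset.sum_add_distrib, h0]
    ring
  linarith [L1, L2, L3]

/-- Differencing formula (Lemma `tech`, part 1): for
`F(n) = Σ_{l=0}^n f(l)·binom(n-l+d-1, d-1)` and `0 ≤ k < d`,
`δ^k F(n) = Σ_{j=1}^k f(n+j)·binom(d-j-1, k-j) + Σ_{l=0}^n f(l)·binom(n-l+d-1, d-k-1)`. -/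
theorem differencing_formula (d : ℕ) (hd : 1 ≤ d) (f : ℕ → ℝ) :
    ∀ k : ℕ, k < d → ∀ n : ℕ,
      fdiff^[k] (fun m =>
          ∑ l ∈ Finset.range (m + 1), f l * (Nat.choose (m - l + d - 1) (d - 1) : ℝ)) n
        = (∑ j ∈ Finset.Icc 1 k, f (n + j) * (Nat.choose (d - j - 1) (k - j) : ℝ))
          + ∑ l ∈ Finset.range (n + 1), f l * (Nat.choose (n - l + d - 1) (d - k - 1) : ℝ) := by
  intro k
  induction k with
  | zero => intro _ n; simp
  | succ k ih =>
    intro hk n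
    have hk' : k < d := by omega
    rw [Function.iterate_succ_apply']
    have hfd : fdiff (fdiff^[k] (fun m =>
          ∑ l ∈ Finset.range (m + 1), f l * (Nat.choose (m - l + d - 1) (d - 1) : ℝ))) n
        = ((∑ j ∈ Finset.Icc 1 k, f (n + 1 + j) * (Nat.choose (d - j - 1) (k - j) : ℝ))
            + ∑ l ∈ Finset.range (n + 2), f l * (Nat.choose (n + 1 - l + d - 1) (d - k - 1) : ℝ))
          - ((∑ j ∈ Finset.Icc 1 k, f (n + j) * (Nat.choose (d - j - 1) (k - j) : ℝ))
            + ∑ l ∈ Finset.range (n + 1), f l * (Nat.choose (n - l + d - 1) (d - k - 1) : ℝ)) := by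
      show (fdiff^[k] _) (n+1) - (fdiff^[k] _) n = _
      rw [ih hk' (n+1), ih hk' n]
    rw [hfd]
    -- convert Icc sums to range sums
    have hIco : ∀ m : ℕ, Finset.Icc 1 m = Finset.Ico 1 (m+1) := fun m => by
      rw [Finset.Ico_add_one_right_eq_Icc]
    rw [hIco, hIco, Finset.sum_Ico_eq_sum_range, Finset.sum_Ico_eq_sum_range,
        Finset.sum_Ico_eq_sum_range]
    have ek : k + 1 - 1 = k := by omega
    have ek1 : k + 1 + 1 - 1 = k + 1 := by omega
    rw [ek, ek1]
    have r1 : ∀ i, f (n + 1 + (1 + i)) = f (n + 2 + i) := fun i => by ring_nf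
    have r2 : ∀ i, f (n + (1 + i)) = f (n + 1 + i) := fun i => by ring_nf
    have r3 : ∀ i : ℕ, d - (1 + i) - 1 = d - 2 - i := fun i => by omega
    have r4 : ∀ i : ℕ, k - (1 + i) = k - 1 - i := fun i => by omega
    have r5 : ∀ i : ℕ, k + 1 - (1 + i) = k - i := fun i => by omega
    have r6 : d - (k + 1) - 1 = d - k - 2 := by omega
    simp only [r1, r2, r3, r4, r5, r6]
    exact step_identity d k n hk f
end
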